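/- Fix T > 0, a continuous matrix-valued function η on [0,T], continuous vector-valued maps t ↦ C_t, H_t on [0,T], and x̄₀ ∈ ℝⁿ. Define Φ : C([0,T];ℝⁿ) → C([0,T];ℝⁿ) by: given X̄, let r solve −dr_t/dt = (Aᵀ − η_tBR⁻¹Bᵀ)r_t + η_tC_t + H_t + FᵀX̄_t, r_T = 0, and let Φ(X̄) solve dΦ(X̄)_t/dt = (A − BR⁻¹Bᵀη_t)Φ(X̄)_t − BR⁻¹Bᵀr_t + C_t, Φ(X̄)₀ = x̄₀. If the constant c_T from the contraction estimate satisfies c_T < 1, then Φ has a unique fixed point; equivalently, the coupled forward-backward ODE system (3.3b)–(3.3c) has a unique solution (r, X̄). -/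

import Mathlib

open MeasureTheory

noncomputable section

/-- The rank-one operator `B R⁻¹ Bᵀ` built from the column vector `b` and the scalar `R`. -/
def Kop {n : ℕ} (R : ℝ) (b : EuclideanSpace ℝ (Fin n)) :
    EuclideanSpace ℝ (Fin n) →L[ℝ] EuclideanSpace ℝ (Fin n) :=
  R⁻¹ • ((innerSL ℝ b).smulRight b)

/-- The contraction constant `c_T` of the MFG fixed-point map. -/
def cT (T nA nAt nK nEta nFt : ℝ) : ℝ :=
  T * Real.exp (T * (nA + nK * nEta + nFt)) *
    (nAt + (nEta + T * nFt * Real.exp (T * (2 * nA + (2 * nEta + 1) * nK))) * nK)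

lemma exp_sub_one_le_mul {y : ℝ} (hy : 0 ≤ y) : Real.exp y - 1 ≤ y * Real.exp y := by
  have h2 : Real.exp y * Real.exp (-y) = 1 := by rw [← Real.exp_add]; simp
  nlinarith [Real.add_one_le_exp (-y), Real.exp_pos y]

lemma gron_aux {K ε x T : ℝ} (hK : 0 ≤ K) (hε : 0 ≤ ε) (hx : 0 ≤ x) (hxT : x ≤ T) :
    gronwallBound 0 K ε x ≤ ε * T * Real.exp (K * T) := by
  have hT : 0 ≤ T := hx.trans hxT
  rcases eq_or_lt_of_le hK with h0 | hKpos
  · rw [← h0, gronwallBound_K0]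
    show (0:ℝ) + ε * x ≤ _
    have : ε * x ≤ ε * T := by nlinarith
    calc (0:ℝ) + ε * x = ε * x := by ring
      _ ≤ ε * T := this
      _ = ε * T * 1 := by ring
      _ ≤ ε * T * Real.exp ((0:ℝ) * T) := by
          simp
  · rw [gronwallBound_of_K_ne_0 hKpos.ne']
    have h1 : Real.exp (K * x) - 1 ≤ K * x * Real.exp (K * x) :=
      exp_sub_one_le_mul (by positivity)
    have h2 : K * x * Real.exp (K * x) ≤ K * T * Real.exp (K * T) := by
      have h3 := Real.exp_le_exp.2 (mul_le_mul_of_nonneg_left hxT hK)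
      have h4 : K * x ≤ K * T := mul_le_mul_of_nonneg_left hxT hK
      have h5 : 0 ≤ K * x := by positivity
      nlinarith [Real.exp_pos (K * x), Real.exp_pos (K * T)]
    have hKne : K ≠ 0 := hKpos.ne'
    have : ε / K * (Real.exp (K * x) - 1) ≤ ε / K * (K * T * Real.exp (K * T)) := by
      apply mul_le_mul_of_nonneg_left (h1.trans h2) (by positivity)
    calc (0:ℝ) * Real.exp (K * x) + ε / K * (Real.exp (K * x) - 1)
        = ε / K * (Real.exp (K * x) - 1) := by ring
      _ ≤ ε / K * (K * T * Real.exp (K * T)) := this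
      _ = ε * T * Real.exp (K * T) := by field_simp

variable {n : ℕ}

local notation "E" => EuclideanSpace ℝ (Fin n)

set_option maxHeartbeats 1000000 in
lemma key_estimate (T : ℝ) (hT : 0 < T)
    (A F K : E →L[ℝ] E)
    (η : ℝ → (E →L[ℝ] E)) (hη : ContinuousOn η (Set.Icc 0 T))
    (C H : ℝ → E) (xbar₀ : E)
    (Φ ρ : (ℝ → E) → (ℝ → E))
    (hρT : ∀ Xb : ℝ → E, ContinuousOn Xb (Set.Icc 0 T) → ρ Xb T = 0)
    (hρode : ∀ Xb : ℝ → E, ContinuousOn Xb (Set.Icc 0 T) →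
      ∀ t ∈ Set.Icc (0:ℝ) T, HasDerivAt (ρ Xb)
        (-((ContinuousLinearMap.adjoint A - (η t).comp K) (ρ Xb t)
          + η t (C t) + H t + ContinuousLinearMap.adjoint F (Xb t))) t)
    (hΦ0 : ∀ Xb : ℝ → E, ContinuousOn Xb (Set.Icc 0 T) → Φ Xb 0 = xbar₀)
    (hΦode : ∀ Xb : ℝ → E, ContinuousOn Xb (Set.Icc 0 T) →
      ∀ t ∈ Set.Icc (0:ℝ) T, HasDerivAt (Φ Xb)
        ((A - K.comp (η t)) (Φ Xb t) - K (ρ Xb t) + C t) t)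
    (hΦcont : ∀ Xb : ℝ → E, ContinuousOn Xb (Set.Icc 0 T) →
      ContinuousOn (Φ Xb) (Set.Icc 0 T))
    (Xb Yb : ℝ → E)
    (hX : ContinuousOn Xb (Set.Icc 0 T)) (hY : ContinuousOn Yb (Set.Icc 0 T))
    (δ : ℝ) (hδ0 : 0 ≤ δ) (hδ : ∀ s ∈ Set.Icc (0:ℝ) T, dist (Xb s) (Yb s) ≤ δ) :
    ∀ t ∈ Set.Icc (0:ℝ) T, dist (Φ Xb t) (Φ Yb t) ≤
      cT T ‖A‖ ‖ContinuousLinearMap.adjoint A‖ ‖K‖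
        (⨆ t : Set.Icc (0:ℝ) T, ‖η ↑t‖) ‖ContinuousLinearMap.adjoint F‖ * δ := by
  intro t ht
  set nA := ‖A‖ with hnA
  set nK := ‖K‖ with hnK
  set nEta := (⨆ t : Set.Icc (0:ℝ) T, ‖η ↑t‖) with hnEta
  set nFt := ‖ContinuousLinearMap.adjoint F‖ with hnFt
  have hAA : ‖ContinuousLinearMap.adjoint A‖ = nA := ContinuousLinearMap.adjoint.norm_map A
  have h0T : (0:ℝ) ∈ Set.Icc (0:ℝ) T := ⟨le_refl 0, hT.le⟩
  have hbdd : BddAbove (Set.range fun s : Set.Icc (0:ℝ) T => ‖η ↑s‖) := by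
    have himg := (isCompact_Icc.image_of_continuousOn hη.norm).bddAbove
    rwa [Set.image_eq_range] at himg
  have hEta_le : ∀ s ∈ Set.Icc (0:ℝ) T, ‖η s‖ ≤ nEta := fun s hs => le_ciSup hbdd ⟨s, hs⟩
  have hEta0 : 0 ≤ nEta := le_trans (norm_nonneg _) (hEta_le 0 h0T)
  set Kr := nA + nEta * nK with hKr
  set Ku := nA + nK * nEta with hKu
  have hKr0 : 0 ≤ Kr := add_nonneg (norm_nonneg _) (mul_nonneg hEta0 (norm_nonneg _))
  have hKu0 : 0 ≤ Ku := add_nonneg (norm_nonneg _) (mul_nonneg (norm_nonneg _) hEta0)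
  set r : ℝ → E := fun s => ρ Xb s - ρ Yb s with hrdef
  -- derivative of r
  have hr : ∀ s ∈ Set.Icc (0:ℝ) T, HasDerivAt r
      (-((ContinuousLinearMap.adjoint A - (η s).comp K) (r s)
        + ContinuousLinearMap.adjoint F (Xb s - Yb s))) s := by
    intro s hs
    have h := (hρode Xb hX s hs).sub (hρode Yb hY s hs)
    refine h.congr_deriv ?_
    simp only [hrdef, ContinuousLinearMap.sub_apply, ContinuousLinearMap.comp_apply, map_sub]
    abel
  -- backward time reversal
  set g : ℝ → E := fun s => r (T - s) with hgdef
  have hmem : ∀ s ∈ Set.Icc (0:ℝ) T, T - s ∈ Set.Icc (0:ℝ) T := by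
    intro s hs
    exact ⟨by linarith [hs.2], by linarith [hs.1]⟩
  have hgc : ContinuousOn g (Set.Icc 0 T) := by
    intro s hs
    exact ((hr (T - s) (hmem s hs)).continuousAt.comp
      ((continuous_const.sub continuous_id).continuousAt)).continuousWithinAt
  have hg' : ∀ s ∈ Set.Ico (0:ℝ) T, HasDerivWithinAt g
      ((ContinuousLinearMap.adjoint A - (η (T - s)).comp K) (g s)
        + ContinuousLinearMap.adjoint F (Xb (T - s) - Yb (T - s))) (Set.Ici s) s := by
    intro s hs
    have hsm : T - s ∈ Set.Icc (0:ℝ) T := hmem s ⟨hs.1, hs.2.le⟩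
    have h1 : HasDerivAt (fun y : ℝ => T - y) (-1) s := by
      simpa using ((hasDerivAt_id s).const_sub T)
    have h2 := (hr (T - s) hsm).scomp s h1
    have h3 : HasDerivAt g
        ((ContinuousLinearMap.adjoint A - (η (T - s)).comp K) (g s)
          + ContinuousLinearMap.adjoint F (Xb (T - s) - Yb (T - s))) s := by
      refine h2.congr_deriv ?_
      simp only [ContinuousLinearMap.sub_apply, ContinuousLinearMap.comp_apply, map_sub,
        neg_smul, one_smul, neg_neg, hgdef]
    exact h3.hasDerivWithinAt
  have hg0 : ‖g 0‖ ≤ 0 := by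
    have : g 0 = 0 := by
      simp only [hgdef, hrdef, sub_zero, hρT Xb hX, hρT Yb hY, sub_self]
    simp [this]
  have hbound_g : ∀ s ∈ Set.Ico (0:ℝ) T,
      ‖(ContinuousLinearMap.adjoint A - (η (T - s)).comp K) (g s)
        + ContinuousLinearMap.adjoint F (Xb (T - s) - Yb (T - s))‖
      ≤ Kr * ‖g s‖ + nFt * δ := by
    intro s hs
    have hsm : T - s ∈ Set.Icc (0:ℝ) T := hmem s ⟨hs.1, hs.2.le⟩
    have e1 : ‖(ContinuousLinearMap.adjoint A - (η (T - s)).comp K) (g s)‖ ≤ Kr * ‖g s‖ := by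
      refine le_trans (ContinuousLinearMap.le_opNorm _ _) ?_
      have hop : ‖ContinuousLinearMap.adjoint A - (η (T - s)).comp K‖ ≤ Kr := by
        refine le_trans (norm_sub_le _ _) ?_
        have h4 := ContinuousLinearMap.opNorm_comp_le (η (T - s)) K
        have h5 := hEta_le _ hsm
        rw [hAA, hKr]
        have : ‖(η (T - s)).comp K‖ ≤ nEta * nK := by
          refine h4.trans ?_
          exact mul_le_mul_of_nonneg_right h5 (norm_nonneg _)
        linarith
      exact mul_le_mul_of_nonneg_right hop (norm_nonneg _)
    have e2 : ‖ContinuousLinearMap.adjoint F (Xb (T - s) - Yb (T - s))‖ ≤ nFt * δ := by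
      refine le_trans (ContinuousLinearMap.le_opNorm _ _) ?_
      have : ‖Xb (T - s) - Yb (T - s)‖ ≤ δ := by
        rw [← dist_eq_norm]; exact hδ _ hsm
      exact mul_le_mul_of_nonneg_left this (norm_nonneg _)
    exact le_trans (norm_add_le _ _) (add_le_add e1 e2)
  have hgB := norm_le_gronwallBound_of_norm_deriv_right_le hgc hg' hg0 hbound_g
  set M := nFt * δ * T * Real.exp (Kr * T) with hM
  have hM0 : 0 ≤ M := by positivity
  have hrM : ∀ s ∈ Set.Icc (0:ℝ) T, ‖r s‖ ≤ M := by
    intro s hs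
    have h1 := hgB (T - s) (hmem s hs)
    have h2 : g (T - s) = r s := by simp [hgdef]
    rw [h2, sub_zero] at h1
    refine h1.trans ?_
    rw [hM]
    exact gron_aux (K := Kr) (ε := nFt * δ) (x := T - s) (T := T) hKr0
      (by positivity) (by linarith [hs.2]) (by linarith [hs.1])
  -- forward difference
  set u : ℝ → E := fun s => Φ Xb s - Φ Yb s with hudef
  have hu0 : ‖u 0‖ ≤ 0 := by
    simp [hudef, hΦ0 Xb hX, hΦ0 Yb hY]
  have huc : ContinuousOn u (Set.Icc 0 T) := (hΦcont Xb hX).sub (hΦcont Yb hY)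
  have hu' : ∀ s ∈ Set.Ico (0:ℝ) T, HasDerivWithinAt u
      ((A - K.comp (η s)) (u s) - K (r s)) (Set.Ici s) s := by
    intro s hs
    have h := (hΦode Xb hX s ⟨hs.1, hs.2.le⟩).sub (hΦode Yb hY s ⟨hs.1, hs.2.le⟩)
    have h2 : HasDerivAt u ((A - K.comp (η s)) (u s) - K (r s)) s := by
      refine h.congr_deriv ?_
      simp only [hudef, hrdef, ContinuousLinearMap.sub_apply, ContinuousLinearMap.comp_apply, map_sub]
      abel
    exact h2.hasDerivWithinAt
  have hbound_u : ∀ s ∈ Set.Ico (0:ℝ) T,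
      ‖(A - K.comp (η s)) (u s) - K (r s)‖ ≤ Ku * ‖u s‖ + nK * M := by
    intro s hs
    have e1 : ‖(A - K.comp (η s)) (u s)‖ ≤ Ku * ‖u s‖ := by
      refine le_trans (ContinuousLinearMap.le_opNorm _ _) ?_
      have hop : ‖A - K.comp (η s)‖ ≤ Ku := by
        refine le_trans (norm_sub_le _ _) ?_
        have h4 := ContinuousLinearMap.opNorm_comp_le K (η s)
        have h5 := hEta_le _ ⟨hs.1, hs.2.le⟩
        rw [hKu]
        have : ‖K.comp (η s)‖ ≤ nK * nEta := by
          refine h4.trans ?_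
          exact mul_le_mul_of_nonneg_left h5 (norm_nonneg _)
        linarith
      exact mul_le_mul_of_nonneg_right hop (norm_nonneg _)
    have e2 : ‖K (r s)‖ ≤ nK * M := by
      refine le_trans (ContinuousLinearMap.le_opNorm _ _) ?_
      exact mul_le_mul_of_nonneg_left (hrM s ⟨hs.1, hs.2.le⟩) (norm_nonneg _)
    exact le_trans (norm_sub_le _ _) (add_le_add e1 e2)
  have huB := norm_le_gronwallBound_of_norm_deriv_right_le huc hu' hu0 hbound_u
  have hut : ‖u t‖ ≤ nK * M * T * Real.exp (Ku * T) := by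
    have h1 := huB t ht
    rw [sub_zero] at h1
    refine h1.trans ?_
    exact gron_aux (K := Ku) (ε := nK * M) (x := t) (T := T) hKu0
      (by positivity) ht.1 ht.2
  -- final arithmetic
  have hFt0 : 0 ≤ nFt := norm_nonneg _
  have hK0 : 0 ≤ nK := norm_nonneg _
  have hA0 : 0 ≤ nA := norm_nonneg _
  have key1 : Real.exp (Kr * T) * Real.exp (Ku * T)
      ≤ Real.exp (T * (nA + nK * nEta + nFt)) *
        Real.exp (T * (2 * nA + (2 * nEta + 1) * nK)) := by
    rw [← Real.exp_add, ← Real.exp_add]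
    apply Real.exp_le_exp.2
    rw [hKr, hKu]
    nlinarith [mul_nonneg hT.le hFt0, mul_nonneg hT.le hK0, mul_nonneg hT.le hA0,
      mul_nonneg hT.le (mul_nonneg hEta0 hK0)]
  have final : nK * M * T * Real.exp (Ku * T) ≤
      cT T nA nA nK nEta nFt * δ := by
    have expos : (0:ℝ) < Real.exp (T * (nA + nK * nEta + nFt)) := Real.exp_pos _
    calc nK * M * T * Real.exp (Ku * T)
        = (T * T * nK * nFt * δ) * (Real.exp (Kr * T) * Real.exp (Ku * T)) := by
          rw [hM]; ring
      _ ≤ (T * T * nK * nFt * δ) * (Real.exp (T * (nA + nK * nEta + nFt)) *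
            Real.exp (T * (2 * nA + (2 * nEta + 1) * nK))) := by
          apply mul_le_mul_of_nonneg_left key1 (by positivity)
      _ = T * Real.exp (T * (nA + nK * nEta + nFt)) *
            ((T * nFt * Real.exp (T * (2 * nA + (2 * nEta + 1) * nK))) * nK) * δ := by ring
      _ ≤ cT T nA nA nK nEta nFt * δ := by
          unfold cT
          apply mul_le_mul_of_nonneg_right _ hδ0
          apply mul_le_mul_of_nonneg_left _ (by positivity)
          nlinarith [mul_nonneg hEta0 hK0]
  rw [dist_eq_norm, hAA]
  exact hut.trans final

set_option maxHeartbeats 1000000 in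
theorem statement7_aux
    (T : ℝ) (hT : 0 < T)
    (A F K : E →L[ℝ] E)
    (η : ℝ → (E →L[ℝ] E)) (hη : ContinuousOn η (Set.Icc 0 T))
    (C H : ℝ → E) (xbar₀ : E)
    (Φ ρ : (ℝ → E) → (ℝ → E))
    (hρT : ∀ Xb : ℝ → E, ContinuousOn Xb (Set.Icc 0 T) → ρ Xb T = 0)
    (hρode : ∀ Xb : ℝ → E, ContinuousOn Xb (Set.Icc 0 T) →
      ∀ t ∈ Set.Icc (0:ℝ) T, HasDerivAt (ρ Xb)
        (-((ContinuousLinearMap.adjoint A - (η t).comp K) (ρ Xb t)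
          + η t (C t) + H t + ContinuousLinearMap.adjoint F (Xb t))) t)
    (hΦ0 : ∀ Xb : ℝ → E, ContinuousOn Xb (Set.Icc 0 T) → Φ Xb 0 = xbar₀)
    (hΦode : ∀ Xb : ℝ → E, ContinuousOn Xb (Set.Icc 0 T) →
      ∀ t ∈ Set.Icc (0:ℝ) T, HasDerivAt (Φ Xb)
        ((A - K.comp (η t)) (Φ Xb t) - K (ρ Xb t) + C t) t)
    (hΦcont : ∀ Xb : ℝ → E, ContinuousOn Xb (Set.Icc 0 T) →
      ContinuousOn (Φ Xb) (Set.Icc 0 T))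
    (hcT : cT T ‖A‖ ‖ContinuousLinearMap.adjoint A‖ ‖K‖
        (⨆ t : Set.Icc (0:ℝ) T, ‖η ↑t‖) ‖ContinuousLinearMap.adjoint F‖ < 1) :
    (∃ Xb : ℝ → E, ContinuousOn Xb (Set.Icc 0 T) ∧
        Set.EqOn (Φ Xb) Xb (Set.Icc 0 T))
      ∧ ∀ Xb Yb : ℝ → E,
          ContinuousOn Xb (Set.Icc 0 T) → ContinuousOn Yb (Set.Icc 0 T) →
          Set.EqOn (Φ Xb) Xb (Set.Icc 0 T) → Set.EqOn (Φ Yb) Yb (Set.Icc 0 T) →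
          Set.EqOn Xb Yb (Set.Icc 0 T) := by
  have key := key_estimate T hT A F K η hη C H xbar₀ Φ ρ hρT hρode hΦ0 hΦode hΦcont
  set cv := cT T ‖A‖ ‖ContinuousLinearMap.adjoint A‖ ‖K‖
      (⨆ t : Set.Icc (0:ℝ) T, ‖η ↑t‖) ‖ContinuousLinearMap.adjoint F‖ with hcv
  have h0T : (0:ℝ) ∈ Set.Icc (0:ℝ) T := ⟨le_refl 0, hT.le⟩
  -- uniqueness
  have uniq : ∀ Xb Yb : ℝ → E,
      ContinuousOn Xb (Set.Icc 0 T) → ContinuousOn Yb (Set.Icc 0 T) →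
      Set.EqOn (Φ Xb) Xb (Set.Icc 0 T) → Set.EqOn (Φ Yb) Yb (Set.Icc 0 T) →
      Set.EqOn Xb Yb (Set.Icc 0 T) := by
    intro Xb Yb hX hY hfX hfY
    have hdc : ContinuousOn (fun s => dist (Xb s) (Yb s)) (Set.Icc 0 T) :=
      continuous_dist.comp_continuousOn (f := fun s => (Xb s, Yb s)) (hX.prodMk hY)
    obtain ⟨t₀, ht₀, hmax⟩ := isCompact_Icc.exists_isMaxOn ⟨0, h0T⟩ hdc
    set m := dist (Xb t₀) (Yb t₀) with hm
    have hm0 : 0 ≤ m := dist_nonneg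
    have hδ : ∀ s ∈ Set.Icc (0:ℝ) T, dist (Xb s) (Yb s) ≤ m := fun s hs => hmax hs
    have h1 := key Xb Yb hX hY m hm0 hδ t₀ ht₀
    rw [hfX ht₀, hfY ht₀] at h1
    have hmle : m ≤ 0 := by nlinarith
    intro s hs
    have h2 : dist (Xb s) (Yb s) = 0 :=
      le_antisymm ((hδ s hs).trans hmle) dist_nonneg
    exact dist_eq_zero.1 h2
  -- existence via Banach fixed point
  haveI : CompactSpace (Set.Icc (0:ℝ) T) := isCompact_iff_compactSpace.mp isCompact_Icc
  haveI : Nonempty C(Set.Icc (0:ℝ) T, E) := ⟨ContinuousMap.const _ 0⟩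
  set ext : C(Set.Icc (0:ℝ) T, E) → ℝ → E :=
    fun f s => f (Set.projIcc 0 T hT.le s) with hext
  have hextc : ∀ f, ContinuousOn (ext f) (Set.Icc 0 T) :=
    fun f => (f.continuous.comp continuous_projIcc).continuousOn
  set G : C(Set.Icc (0:ℝ) T, E) → C(Set.Icc (0:ℝ) T, E) :=
    fun f => ⟨(Set.Icc (0:ℝ) T).restrict (Φ (ext f)), (hΦcont _ (hextc f)).restrict⟩ with hG
  have hGlip : ∀ f g : C(Set.Icc (0:ℝ) T, E),
      dist (G f) (G g) ≤ max cv 0 * dist f g := by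
    intro f g
    have h0 : (0:ℝ) ≤ max cv 0 * dist f g :=
      mul_nonneg (le_max_right _ _) dist_nonneg
    refine (ContinuousMap.dist_le h0).2 fun x => ?_
    have h1 := key (ext f) (ext g) (hextc f) (hextc g) (dist f g) dist_nonneg
      (fun s _ => ContinuousMap.dist_apply_le_dist _) ↑x x.2
    refine le_trans h1 ?_
    exact mul_le_mul_of_nonneg_right (le_max_left _ _) dist_nonneg
  set Kn : NNReal := ⟨max cv 0, le_max_right _ _⟩ with hKn
  have hK1 : Kn < 1 := by
    have h2 : (Kn : ℝ) < ((1 : NNReal) : ℝ) := by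
      simp only [hKn, NNReal.coe_mk, NNReal.coe_one]
      exact max_lt hcT one_pos
    exact_mod_cast h2
  have hcontr : ContractingWith Kn G :=
    ⟨hK1, LipschitzWith.of_dist_le_mul fun f g => hGlip f g⟩
  set f0 := ContractingWith.fixedPoint G hcontr with hf0
  have hfix : G f0 = f0 := hcontr.fixedPoint_isFixedPt
  refine ⟨⟨ext f0, hextc f0, ?_⟩, uniq⟩
  intro t ht
  have h1 : G f0 ⟨t, ht⟩ = f0 ⟨t, ht⟩ := DFunLike.congr_fun hfix ⟨t, ht⟩
  have h2 : ext f0 t = f0 ⟨t, ht⟩ := by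
    simp only [hext, Set.projIcc_of_mem hT.le ht]
  show Φ (ext f0) t = ext f0 t
  rw [h2]
  exact h1


/-- the MFG fixed-point map `Φ` — sending `X̄` to the solution of the
forward ODE driven by the solution `r = ρ(X̄)` of the backward ODE — has a unique
fixed point (in the sup-norm space of continuous paths on `[0,T]`) whenever `c_T < 1`;
equivalently, the coupled forward-backward system (3.3b)-(3.3c) is uniquely solvable. -/
theorem statement7
    {n : ℕ} (hn : 1 ≤ n) (T : ℝ) (hT : 0 < T)
    (A F : EuclideanSpace ℝ (Fin n) →L[ℝ] EuclideanSpace ℝ (Fin n))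
    (b : EuclideanSpace ℝ (Fin n)) (R : ℝ) (hR : 0 < R)
    (η : ℝ → (EuclideanSpace ℝ (Fin n) →L[ℝ] EuclideanSpace ℝ (Fin n)))
    (hη : ContinuousOn η (Set.Icc 0 T))
    (C H : ℝ → EuclideanSpace ℝ (Fin n))
    (hC : ContinuousOn C (Set.Icc 0 T)) (hH : ContinuousOn H (Set.Icc 0 T))
    (xbar₀ : EuclideanSpace ℝ (Fin n))
    (Φ ρ : (ℝ → EuclideanSpace ℝ (Fin n)) → (ℝ → EuclideanSpace ℝ (Fin n)))
    -- ρ(X̄) solves the backward ODE (3.3b):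
    -- −dr_t/dt = (Aᵀ − η_tBR⁻¹Bᵀ)r_t + η_tC_t + H_t + FᵀX̄_t, r_T = 0
    (hρT : ∀ Xb : ℝ → EuclideanSpace ℝ (Fin n), ContinuousOn Xb (Set.Icc 0 T) → ρ Xb T = 0)
    (hρode : ∀ Xb : ℝ → EuclideanSpace ℝ (Fin n), ContinuousOn Xb (Set.Icc 0 T) →
      ∀ t ∈ Set.Icc (0:ℝ) T, HasDerivAt (ρ Xb)
        (-((ContinuousLinearMap.adjoint A - (η t).comp (Kop R b)) (ρ Xb t)
          + η t (C t) + H t + ContinuousLinearMap.adjoint F (Xb t))) t)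
    -- Φ(X̄) solves the forward ODE (3.3c):
    -- dX̄_t/dt = (A − BR⁻¹Bᵀη_t)X̄_t − BR⁻¹Bᵀr_t + C_t, X̄₀ = x̄₀
    (hΦ0 : ∀ Xb : ℝ → EuclideanSpace ℝ (Fin n), ContinuousOn Xb (Set.Icc 0 T) →
      Φ Xb 0 = xbar₀)
    (hΦode : ∀ Xb : ℝ → EuclideanSpace ℝ (Fin n), ContinuousOn Xb (Set.Icc 0 T) →
      ∀ t ∈ Set.Icc (0:ℝ) T, HasDerivAt (Φ Xb)
        ((A - (Kop R b).comp (η t)) (Φ Xb t) - Kop R b (ρ Xb t) + C t) t)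
    (hΦcont : ∀ Xb : ℝ → EuclideanSpace ℝ (Fin n), ContinuousOn Xb (Set.Icc 0 T) →
      ContinuousOn (Φ Xb) (Set.Icc 0 T))
    -- the contraction constant is strictly less than one
    (hcT : cT T ‖A‖ ‖ContinuousLinearMap.adjoint A‖ ‖Kop R b‖
        (⨆ t : Set.Icc (0:ℝ) T, ‖η ↑t‖) ‖ContinuousLinearMap.adjoint F‖ < 1) :
    -- existence of a fixed point, unique among continuous paths up to equality on [0,T]
    (∃ Xb : ℝ → EuclideanSpace ℝ (Fin n), ContinuousOn Xb (Set.Icc 0 T) ∧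
        Set.EqOn (Φ Xb) Xb (Set.Icc 0 T))
      ∧ ∀ Xb Yb : ℝ → EuclideanSpace ℝ (Fin n),
          ContinuousOn Xb (Set.Icc 0 T) → ContinuousOn Yb (Set.Icc 0 T) →
          Set.EqOn (Φ Xb) Xb (Set.Icc 0 T) → Set.EqOn (Φ Yb) Yb (Set.Icc 0 T) →
          Set.EqOn Xb Yb (Set.Icc 0 T) := by
  exact statement7_aux T hT A F (Kop R b) η hη C H xbar₀ Φ ρ hρT hρode hΦ0 hΦode hΦcont hcT

end
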